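/- Given degree p, regularity r, and data (g₀, g₁) with g₀ a degree-p spline and g₁ any function, the function g^{(S)}(u,v) = g₀(v)(N^{p,r}_0(u) + N^{p,r}_1(u)) + (α^{(S)}(v)g₁(v) + β^{(S)}(v)g₀'(v))·(1/((k+1)p))·N^{p,r}_1(u) satisfies g^{(S)}(0,v) = g₀(v) and D_u g^{(S)}(0,v) = α^{(S)}(v)g₁(v) + β^{(S)}(v)g₀'(v) for all v ∈ [0,1]. -/

import Mathlib

/-- Given data `(g₀, g₁)` with `g₀` a degree-`p` spline (differentiable along the
interface) and `g₁` any function, the function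
`g^{(S)}(u,v) = g₀(v)(N₀(u) + N₁(u)) + (α^{(S)}(v)g₁(v) + β^{(S)}(v)g₀'(v))·N₁(u)/((k+1)p)`
satisfies `g^{(S)}(0,v) = g₀(v)` and `D_u g^{(S)}(0,v) = α^{(S)}(v)g₁(v) + β^{(S)}(v)g₀'(v)`
for all `v ∈ [0,1]`.  Here `N₀, N₁` are the first two B-splines of the open knot vector
`T^{p,r}_k` with uniform interior knots, characterized at `u = 0` by `N₀(0) = 1`,
`N₁(0) = 0`, `N₀'(0) = −(k+1)p` and `N₁'(0) = (k+1)p`. -/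
theorem stmt7 (p k : ℕ) (hp : 1 ≤ p)
    (N0 N1 : ℝ → ℝ)
    (hN0diff : DifferentiableAt ℝ N0 0) (hN1diff : DifferentiableAt ℝ N1 0)
    (hN00 : N0 0 = 1) (hN10 : N1 0 = 0)
    (hN0' : deriv N0 0 = -((k + 1 : ℝ) * p)) (hN1' : deriv N1 0 = (k + 1 : ℝ) * p)
    (g₀ g₁ α β : ℝ → ℝ) (hg₀ : Differentiable ℝ g₀)
    (gS : ℝ → ℝ → ℝ)
    (hgS : ∀ u v : ℝ, gS u v =
      g₀ v * (N0 u + N1 u)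
        + (α v * g₁ v + β v * deriv g₀ v) * (1 / ((k + 1 : ℝ) * p)) * N1 u) :
    ∀ v ∈ Set.Icc (0 : ℝ) 1,
      gS 0 v = g₀ v ∧
      deriv (fun u => gS u v) 0 = α v * g₁ v + β v * deriv g₀ v := by
  intro v hv
  have hne : ((k + 1 : ℝ) * p) ≠ 0 := by
    have : (0:ℝ) < p := by exact_mod_cast hp
    positivity
  constructor
  · rw [hgS]; simp [hN00, hN10]
  · have : (fun u => gS u v) = fun u =>
        g₀ v * (N0 u + N1 u)
          + (α v * g₁ v + β v * deriv g₀ v) * (1 / ((k + 1 : ℝ) * p)) * N1 u := by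
      funext u; exact hgS u v
    rw [this]
    rw [deriv_fun_add ((hN0diff.fun_add hN1diff).const_mul _) (hN1diff.const_mul _),
        deriv_const_mul _ (hN0diff.fun_add hN1diff), deriv_const_mul _ hN1diff,
        deriv_fun_add hN0diff hN1diff, hN0', hN1']
    field_simp
    ring
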